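/- Let F = M_1 + M_2 = x_0^{a_0}x_1^{a_1}⋯x_n^{a_n} + y_0^{b_0}y_1^{b_1}⋯y_m^{b_m} ∈ S = ℂ[x_0,…,x_n,y_0,…,y_m], a sum of two monomials of the same degree d ≥ 1 in disjoint sets of variables, with all exponents at least 1. Let T be the dual ring acting on S by letting each dual variable act as the corresponding partial derivative. Then the ℂ-vector space dimensions of the apolar quotients satisfy dim_ℂ T/F^⊥ = dim_ℂ T/M_1^⊥ + dim_ℂ T/M_2^⊥ − 2. -/

import Mathlib

open MvPolynomial
set_option linter.unusedSectionVars false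

noncomputable section

/-- The linear form `c₀x₀ + ⋯ + cₙxₙ` with coefficient vector `c`. -/
def lin {σ : Type*} [Fintype σ] (c : σ → ℂ) : MvPolynomial σ ℂ :=
  ∑ i, C (c i) * X i

/-- `F` admits a Waring decomposition `F = L₁^d + ⋯ + L_r^d`. -/
def HasWaringDecomp {σ : Type*} [Fintype σ] (d : ℕ) (F : MvPolynomial σ ℂ) (r : ℕ) : Prop :=
  ∃ L : Fin r → σ → ℂ, F = ∑ j, lin (L j) ^ d

/-- The Waring rank of `F` (as a form of degree `d`). -/
def waringRank {σ : Type*} [Fintype σ] (d : ℕ) (F : MvPolynomial σ ℂ) : ℕ :=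
  sInf {r | HasWaringDecomp d F r}

/-- The linear form with coefficient vector `a` lies in the Waring locus of `F`:
there are linear forms `L₂, …, L_r` with `r = rk F` such that `F` lies in the
`ℂ`-linear span of `L^d, L₂^d, …, L_r^d`. -/
def InWaringLocus {σ : Type*} [Fintype σ] (d : ℕ) (F : MvPolynomial σ ℂ) (a : σ → ℂ) : Prop :=
  ∃ (c : Fin (waringRank d F) → ℂ) (L : Fin (waringRank d F) → σ → ℂ)
    (j₀ : Fin (waringRank d F)), L j₀ = a ∧ F = ∑ j, c j • lin (L j) ^ d

/-- The iterated partial derivative operator `∂^m = ∏ᵢ ∂ᵢ^{mᵢ}` attached to a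
multi-exponent `m`. -/
def mderiv {σ : Type*} [Fintype σ] (m : σ →₀ ℕ) :
    Module.End ℂ (MvPolynomial σ ℂ) :=
  (Finset.univ.toList.map fun i : σ =>
    ((pderiv i).toLinearMap : Module.End ℂ (MvPolynomial σ ℂ)) ^ m i).prod

/-- The apolarity action `g ∘ F` of the dual polynomial ring on `S`:
each dual variable acts as the corresponding partial derivative. -/
def contract {σ : Type*} [Fintype σ] (g F : MvPolynomial σ ℂ) : MvPolynomial σ ℂ :=
  ∑ m ∈ g.support, coeff m g • mderiv m F

lemma contract_add {σ : Type*} [Fintype σ] (g h F : MvPolynomial σ ℂ) :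
    contract (g + h) F = contract g F + contract h F := by
  classical
  rw [contract, Finset.sum_subset (support_add (p := g) (q := h))
    (fun m _ hm => by simp [MvPolynomial.notMem_support_iff.mp hm])]
  simp_rw [coeff_add, add_smul, Finset.sum_add_distrib]
  congr 1
  · exact (Finset.sum_subset Finset.subset_union_left fun m _ hm => by
      simp [MvPolynomial.notMem_support_iff.mp hm]).symm
  · exact (Finset.sum_subset Finset.subset_union_right fun m _ hm => by
      simp [MvPolynomial.notMem_support_iff.mp hm]).symm

lemma contract_smul {σ : Type*} [Fintype σ] (c : ℂ) (g F : MvPolynomial σ ℂ) :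
    contract (c • g) F = c • contract g F := by
  classical
  rw [contract, Finset.sum_subset (support_smul (a := c) (f := g))
    (fun m _ hm => by simp [MvPolynomial.notMem_support_iff.mp hm]), contract, Finset.smul_sum]
  exact Finset.sum_congr rfl fun m _ => by rw [coeff_smul, smul_assoc]

/-- The apolar ideal `F^⊥ = {g : g ∘ F = 0}` of `F`, viewed as a `ℂ`-subspace of the
dual polynomial ring (as an ideal it is in particular a `ℂ`-subspace, and the
dimension of the quotient is the length of the apolar algebra `T/F^⊥`). -/
def perp {σ : Type*} [Fintype σ] (F : MvPolynomial σ ℂ) :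
    Submodule ℂ (MvPolynomial σ ℂ) where
  carrier := {g | contract g F = 0}
  add_mem' := by
    intro p q hp hq
    simp only [Set.mem_setOf_eq] at *
    rw [contract_add, hp, hq, add_zero]
  zero_mem' := by simp [contract]
  smul_mem' := by
    intro c g hg
    simp only [Set.mem_setOf_eq] at *
    rw [contract_smul, hg, smul_zero]

section Aux
variable {σ : Type*} [Fintype σ] [DecidableEq σ]

lemma Nat.descFactorial_succ' (n k : ℕ) :
    n.descFactorial (k + 1) = n * (n - 1).descFactorial k := by
  cases n with
  | zero => simp
  | succ n => rw [Nat.succ_descFactorial_succ]; simp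

lemma pderiv_pow_monomial (i : σ) (k : ℕ) (s : σ →₀ ℕ) (c : ℂ) :
    (((pderiv i).toLinearMap : Module.End ℂ (MvPolynomial σ ℂ)) ^ k) (monomial s c)
      = monomial (s - Finsupp.single i k) (c * (s i).descFactorial k) := by
  induction k generalizing s c with
  | zero => simp
  | succ k ih =>
    rw [pow_succ, Module.End.mul_apply]
    have : ((pderiv i).toLinearMap : Module.End ℂ (MvPolynomial σ ℂ)) (monomial s c)
        = monomial (s - Finsupp.single i 1) (c * s i) := by
      simp [pderiv_monomial]
    rw [this, ih]
    have he : s - Finsupp.single i 1 - Finsupp.single i k = s - Finsupp.single i (k + 1) := by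
      rw [tsub_tsub, ← Finsupp.single_add, add_comm]
    rw [he]
    congr 1
    have hv := Finsupp.tsub_apply s (Finsupp.single i 1) i
    rw [Finsupp.single_eq_same] at hv
    rw [hv, Nat.descFactorial_succ' (s i) k]
    push_cast
    ring

lemma list_sum_single_apply (m : σ →₀ ℕ) (l : List σ) (i : σ) (hi : i ∉ l) :
    ((l.map fun j => Finsupp.single j (m j)).sum) i = 0 := by
  induction l with
  | nil => simp
  | cons j l ih =>
    simp only [List.map_cons, List.sum_cons, Finsupp.add_apply]
    rw [Finsupp.single_eq_of_ne' (by rintro rfl; exact hi List.mem_cons_self),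
      ih (fun h => hi (List.mem_cons_of_mem _ h)), add_zero]

lemma prod_pderiv_pow_monomial (m : σ →₀ ℕ) (l : List σ) (hl : l.Nodup) (s : σ →₀ ℕ) (c : ℂ) :
    ((l.map fun i => ((pderiv i).toLinearMap : Module.End ℂ (MvPolynomial σ ℂ)) ^ m i).prod)
        (monomial s c)
      = monomial (s - (l.map fun i => Finsupp.single i (m i)).sum)
          (c * (l.map fun i => ((s i).descFactorial (m i) : ℂ)).prod) := by
  induction l with
  | nil => simp
  | cons i l ih =>
    have hi : i ∉ l := (List.nodup_cons.mp hl).1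
    rw [List.map_cons, List.prod_cons, Module.End.mul_apply, ih (List.nodup_cons.mp hl).2,
      pderiv_pow_monomial]
    have ht : ((l.map fun j => Finsupp.single j (m j)).sum) i = 0 :=
      list_sum_single_apply m l i hi
    congr 1
    · rw [List.map_cons, List.sum_cons, tsub_tsub, add_comm]
    · have hv := Finsupp.tsub_apply s (l.map fun j => Finsupp.single j (m j)).sum i
      rw [ht, Nat.sub_zero] at hv
      rw [hv, List.map_cons, List.prod_cons]
      ring

lemma mderiv_monomial (m s : σ →₀ ℕ) (c : ℂ) :
    mderiv m (monomial s c)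
      = monomial (s - m) (c * ∏ i, ((s i).descFactorial (m i) : ℂ)) := by
  rw [mderiv, prod_pderiv_pow_monomial m _ Finset.univ.nodup_toList]
  congr 2
  · rw [Finset.sum_map_toList, Finsupp.univ_sum_single]
  · rw [Finset.prod_map_toList]

lemma mderiv_zero' : mderiv (0 : σ →₀ ℕ) = (1 : Module.End ℂ (MvPolynomial σ ℂ)) := by
  rw [mderiv]
  refine List.prod_eq_one ?_
  intro x hx
  simp only [List.mem_map] at hx
  obtain ⟨i, _, rfl⟩ := hx
  simp

/-- contraction against `F` as a linear map in `g`. -/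
def phiF (F : MvPolynomial σ ℂ) : MvPolynomial σ ℂ →ₗ[ℂ] MvPolynomial σ ℂ where
  toFun g := contract g F
  map_add' g h := contract_add g h F
  map_smul' c g := contract_smul c g F

lemma perp_eq_ker (F : MvPolynomial σ ℂ) : perp F = LinearMap.ker (phiF F) := rfl

lemma range_phiF (F : MvPolynomial σ ℂ) :
    LinearMap.range (phiF F)
      = Submodule.span ℂ (Set.range fun m : σ →₀ ℕ => mderiv m F) := by
  apply le_antisymm
  · rintro x ⟨g, rfl⟩
    show contract g F ∈ _
    rw [contract]
    exact Submodule.sum_mem _ fun m _ =>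
      Submodule.smul_mem _ _ (Submodule.subset_span ⟨m, rfl⟩)
  · rw [Submodule.span_le]
    rintro x ⟨m, rfl⟩
    refine ⟨monomial m 1, ?_⟩
    show contract (monomial m 1) F = _
    rw [contract, support_monomial]
    simp [coeff_monomial]

lemma finrank_quot_eq (F : MvPolynomial σ ℂ) :
    Module.finrank ℂ (MvPolynomial σ ℂ ⧸ perp F)
      = Module.finrank ℂ
          (Submodule.span ℂ (Set.range fun m : σ →₀ ℕ => mderiv m F)) := by
  rw [perp_eq_ker, ← range_phiF]
  exact (LinearMap.quotKerEquivRange (phiF F)).finrank_eq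

lemma desc_ne_zero {A m : σ →₀ ℕ} (h : m ≤ A) :
    (∏ i, ((A i).descFactorial (m i) : ℂ)) ≠ 0 := by
  rw [Finset.prod_ne_zero_iff]
  intro i _
  have : (A i).descFactorial (m i) ≠ 0 := by
    rw [Ne, Nat.descFactorial_eq_zero_iff_lt, not_lt]
    exact h i
  exact_mod_cast this

lemma mderiv_monomial_one (A m : σ →₀ ℕ) :
    mderiv m (monomial A (1 : ℂ))
      = (∏ i, ((A i).descFactorial (m i) : ℂ)) • monomial (A - m) (1 : ℂ) := by
  rw [mderiv_monomial, one_mul, smul_monomial, smul_eq_mul, mul_one]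

lemma tsub_ne_left {A m : σ →₀ ℕ} (hm : m ≤ A) (h0 : m ≠ 0) : A - m ≠ A := by
  intro h
  apply h0
  have := tsub_tsub_cancel_of_le hm
  rw [h, tsub_self] at this
  exact this.symm

lemma span_mderiv_monomial (A : σ →₀ ℕ) :
    Submodule.span ℂ (Set.range fun m : σ →₀ ℕ => mderiv m (monomial A (1 : ℂ)))
      = Submodule.span ℂ ((fun e => monomial e (1 : ℂ)) '' {e | e ≤ A}) := by
  apply le_antisymm <;> rw [Submodule.span_le]
  · rintro x ⟨m, rfl⟩
    show mderiv m (monomial A (1 : ℂ)) ∈ _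
    by_cases h : m ≤ A
    · rw [mderiv_monomial_one]
      exact Submodule.smul_mem _ _
        (Submodule.subset_span ⟨A - m, show A - m ≤ A from tsub_le_self, rfl⟩)
    · rw [mderiv_monomial_one]
      obtain ⟨i, hi⟩ := not_forall.mp (fun hh => h fun j => hh j)
      have : ((A i).descFactorial (m i) : ℂ) = 0 := by
        have := Nat.descFactorial_eq_zero_iff_lt.mpr (lt_of_not_ge hi)
        exact_mod_cast congrArg Nat.cast this
      rw [Finset.prod_eq_zero (Finset.mem_univ i) this, zero_smul]
      exact Submodule.zero_mem _
  · rintro x ⟨e, he, rfl⟩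
    show monomial e (1 : ℂ) ∈ _
    have hm : A - (A - e) = e := tsub_tsub_cancel_of_le he
    have hle : A - e ≤ A := tsub_le_self
    have hd := desc_ne_zero (m := A - e) (A := A) hle
    have : monomial e (1 : ℂ)
        = (∏ i, ((A i).descFactorial ((A - e) i) : ℂ))⁻¹ • mderiv (A - e) (monomial A 1) := by
      rw [mderiv_monomial_one, hm, inv_smul_smul₀ hd]
    rw [this]
    exact Submodule.smul_mem _ _ (Submodule.subset_span ⟨A - e, rfl⟩)

lemma finrank_span_monomials (s : Finset (σ →₀ ℕ)) :
    Module.finrank ℂ (Submodule.span ℂ ((fun e => monomial e (1 : ℂ)) '' (s : Set (σ →₀ ℕ)))) = s.card := by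
  have li : LinearIndependent ℂ (fun e : ↥s => monomial (e : σ →₀ ℕ) (1 : ℂ)) := by
    have := (basisMonomials σ ℂ).linearIndependent
    have h2 := this.comp ((↑) : ↥s → σ →₀ ℕ) Subtype.coe_injective
    simp only [coe_basisMonomials] at h2
    exact h2
  have himg : (fun e => monomial e (1 : ℂ)) '' ↑s
      = Set.range fun e : ↥s => monomial (e : σ →₀ ℕ) (1 : ℂ) :=
    Set.image_eq_range _ _
  rw [himg, finrank_span_eq_card li, Fintype.card_coe]

/-- the linear automorphism `p ↦ p + coeff A p • X^B`. -/
def addBmap (A B : σ →₀ ℕ) : MvPolynomial σ ℂ →ₗ[ℂ] MvPolynomial σ ℂ where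
  toFun p := p + coeff A p • monomial B 1
  map_add' p q := by
    rw [coeff_add, add_smul]
    abel
  map_smul' c p := by
    simp [coeff_smul, smul_smul, smul_add]

def subBmap (A B : σ →₀ ℕ) : MvPolynomial σ ℂ →ₗ[ℂ] MvPolynomial σ ℂ where
  toFun p := p - coeff A p • monomial B 1
  map_add' p q := by
    rw [coeff_add, add_smul]
    abel
  map_smul' c p := by
    simp [coeff_smul, smul_smul, smul_sub]

def addBequiv (A B : σ →₀ ℕ) (h : B ≠ A) : MvPolynomial σ ℂ ≃ₗ[ℂ] MvPolynomial σ ℂ :=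
  LinearEquiv.ofLinear (addBmap A B) (subBmap A B)
    (by
      refine LinearMap.ext fun p => ?_
      simp only [LinearMap.coe_comp, Function.comp_apply, LinearMap.id_coe, id_eq,
        addBmap, subBmap, LinearMap.coe_mk, AddHom.coe_mk]
      rw [coeff_sub, coeff_smul, coeff_monomial, if_neg h]
      simp only [smul_eq_mul, mul_zero, sub_zero]
      rw [sub_add_cancel])
    (by
      refine LinearMap.ext fun p => ?_
      simp only [LinearMap.coe_comp, Function.comp_apply, LinearMap.id_coe, id_eq,
        addBmap, subBmap, LinearMap.coe_mk, AddHom.coe_mk]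
      rw [coeff_add, coeff_smul, coeff_monomial, if_neg h]
      simp only [smul_eq_mul, mul_zero, add_zero]
      rw [add_sub_cancel_right])

end Aux

section Aux2
variable {σ : Type*} [Fintype σ] [DecidableEq σ]

lemma desc_eq_zero_of_not_le {A m : σ →₀ ℕ} (h : ¬ m ≤ A) :
    (∏ i, ((A i).descFactorial (m i) : ℂ)) = 0 := by
  obtain ⟨i, hi⟩ := not_forall.mp (fun hh => h fun j => hh j)
  have : ((A i).descFactorial (m i) : ℂ) = 0 := by
    exact_mod_cast congrArg (Nat.cast (R := ℂ))
      (Nat.descFactorial_eq_zero_iff_lt.mpr (lt_of_not_ge hi))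
  exact Finset.prod_eq_zero (Finset.mem_univ i) this

lemma prod_monomial_one {τ : Type*} (s : Finset τ) (f : τ → (σ →₀ ℕ)) :
    (∏ i ∈ s, monomial (f i) (1 : ℂ)) = monomial (∑ i ∈ s, f i) 1 := by
  classical
  induction s using Finset.induction with
  | empty => simp
  | insert _ _ h ih =>
    rw [Finset.prod_insert h, Finset.sum_insert h, ih, monomial_mul, one_mul]

lemma addBequiv_apply (A B : σ →₀ ℕ) (h : B ≠ A) (p : MvPolynomial σ ℂ) :
    addBequiv A B h p = p + coeff A p • monomial B 1 := rfl

lemma finrank_span_insert (A B : σ →₀ ℕ) (h : B ≠ A) (s : Set (σ →₀ ℕ)) (hA : A ∉ s) :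
    Module.finrank ℂ (Submodule.span ℂ
        (insert (monomial A (1 : ℂ) + monomial B 1) ((fun e => monomial e (1 : ℂ)) '' s)))
      = Module.finrank ℂ
          (Submodule.span ℂ ((fun e => monomial e (1 : ℂ)) '' insert A s)) := by
  have hmap : Submodule.map (addBequiv A B h : MvPolynomial σ ℂ →ₗ[ℂ] MvPolynomial σ ℂ)
      (Submodule.span ℂ ((fun e => monomial e (1 : ℂ)) '' insert A s))
      = Submodule.span ℂ
          (insert (monomial A (1 : ℂ) + monomial B 1) ((fun e => monomial e (1 : ℂ)) '' s)) := by
    rw [Submodule.map_span]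
    congr 1
    rw [Set.image_image, Set.image_insert_eq]
    congr 1
    · rw [LinearEquiv.coe_coe, addBequiv_apply, coeff_monomial, if_pos rfl, one_smul]
    · refine Set.image_congr fun e he => ?_
      rw [LinearEquiv.coe_coe, addBequiv_apply, coeff_monomial, if_neg (by rintro rfl; exact hA he), zero_smul,
        add_zero]
  rw [← hmap, LinearEquiv.finrank_map_eq]

lemma mon_mem_span_mderiv (A B : σ →₀ ℕ) (hmeet : A ⊓ B = 0) {e : σ →₀ ℕ}
    (he : e ≤ A) (hne : e ≠ A) :
    monomial e (1 : ℂ) ∈ Submodule.span ℂ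
      (Set.range fun m : σ →₀ ℕ => mderiv m (monomial A 1 + monomial B 1)) := by
  set m := A - e with hm
  have hmA : m ≤ A := tsub_le_self
  have hm0 : m ≠ 0 := by
    intro h0
    exact hne (le_antisymm he (tsub_eq_zero_iff_le.mp h0))
  have hmB : ¬ m ≤ B := by
    intro hB
    exact hm0 (le_antisymm (by simpa [hmeet] using le_inf hmA hB) (zero_le (a := m)))
  have hAe : A - m = e := tsub_tsub_cancel_of_le he
  have hval : mderiv m (monomial A 1 + monomial B 1)
      = (∏ i, ((A i).descFactorial (m i) : ℂ)) • monomial e (1 : ℂ) := by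
    rw [map_add, mderiv_monomial_one, mderiv_monomial_one, desc_eq_zero_of_not_le hmB,
      zero_smul, add_zero, hAe]
  have hd := desc_ne_zero hmA
  have : monomial e (1 : ℂ)
      = (∏ i, ((A i).descFactorial (m i) : ℂ))⁻¹ • mderiv m (monomial A 1 + monomial B 1) := by
    rw [hval, inv_smul_smul₀ hd]
  rw [this]
  exact Submodule.smul_mem _ _ (Submodule.subset_span ⟨m, rfl⟩)

lemma span_mderiv_sum (A B : σ →₀ ℕ) (hmeet : A ⊓ B = 0) :
    Submodule.span ℂ (Set.range fun m : σ →₀ ℕ => mderiv m (monomial A 1 + monomial B 1))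
      = Submodule.span ℂ (insert (monomial A (1 : ℂ) + monomial B 1)
          ((fun e => monomial e (1 : ℂ)) ''
            ({e | e ≤ A ∧ e ≠ A} ∪ {e | e ≤ B ∧ e ≠ B}))) := by
  apply le_antisymm <;> rw [Submodule.span_le]
  · rintro x ⟨m, rfl⟩
    show mderiv m (monomial A 1 + monomial B 1) ∈ _
    by_cases hm : m = 0
    · subst hm
      rw [mderiv_zero', Module.End.one_apply]
      exact Submodule.subset_span (Set.mem_insert _ _)
    · rw [map_add]
      refine Submodule.add_mem _ ?_ ?_
      · by_cases hA : m ≤ A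
        · rw [mderiv_monomial_one]
          exact Submodule.smul_mem _ _ (Submodule.subset_span
            (Set.mem_insert_of_mem _
              ⟨A - m, Or.inl ⟨tsub_le_self, tsub_ne_left hA hm⟩, rfl⟩))
        · rw [mderiv_monomial_one, desc_eq_zero_of_not_le hA, zero_smul]
          exact Submodule.zero_mem _
      · by_cases hB : m ≤ B
        · rw [mderiv_monomial_one]
          exact Submodule.smul_mem _ _ (Submodule.subset_span
            (Set.mem_insert_of_mem _
              ⟨B - m, Or.inr ⟨tsub_le_self, tsub_ne_left hB hm⟩, rfl⟩))
        · rw [mderiv_monomial_one, desc_eq_zero_of_not_le hB, zero_smul]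
          exact Submodule.zero_mem _
  · rintro x (rfl | ⟨e, he, rfl⟩)
    · refine Submodule.subset_span ⟨0, ?_⟩
      show mderiv 0 (monomial A 1 + monomial B 1) = _
      rw [mderiv_zero', Module.End.one_apply]
    · show monomial e (1 : ℂ) ∈ _
      rcases he with ⟨heA, hneA⟩ | ⟨heB, hneB⟩
      · exact mon_mem_span_mderiv A B hmeet heA hneA
      · have := mon_mem_span_mderiv B A (by rw [inf_comm]; exact hmeet) heB hneB
        rwa [add_comm (monomial B (1 : ℂ))] at this

end Aux2

/-- for a sum `F = M₁ + M₂` of two monomials of the same degree in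
disjoint sets of variables, the lengths of the apolar algebras satisfy
`dim T/F^⊥ = dim T/M₁^⊥ + dim T/M₂^⊥ - 2`. -/
theorem apolar_length_of_sum_of_two_monomials (n m : ℕ)
    (a : Fin (n + 1) → ℕ) (b : Fin (m + 1) → ℕ)
    (ha : ∀ i, 1 ≤ a i) (hb : ∀ j, 1 ≤ b j)
    (d : ℕ) (hd : 1 ≤ d) (hda : ∑ i, a i = d) (hdb : ∑ j, b j = d) :
    Module.finrank ℂ (MvPolynomial (Fin (n + 1) ⊕ Fin (m + 1)) ℂ ⧸
        perp ((∏ i, X (Sum.inl i) ^ a i) + ∏ j, X (Sum.inr j) ^ b j)) =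
      Module.finrank ℂ (MvPolynomial (Fin (n + 1) ⊕ Fin (m + 1)) ℂ ⧸
        perp (∏ i, (X (Sum.inl i) : MvPolynomial (Fin (n + 1) ⊕ Fin (m + 1)) ℂ) ^ a i)) +
      Module.finrank ℂ (MvPolynomial (Fin (n + 1) ⊕ Fin (m + 1)) ℂ ⧸
        perp (∏ j, (X (Sum.inr j) : MvPolynomial (Fin (n + 1) ⊕ Fin (m + 1)) ℂ) ^ b j))
      - 2 := by
  classical
  set A : Fin (n + 1) ⊕ Fin (m + 1) →₀ ℕ := ∑ i, Finsupp.single (Sum.inl i) (a i) with hA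
  set B : Fin (n + 1) ⊕ Fin (m + 1) →₀ ℕ := ∑ j, Finsupp.single (Sum.inr j) (b j) with hB
  have hMA : (∏ i, (X (Sum.inl i) : MvPolynomial (Fin (n + 1) ⊕ Fin (m + 1)) ℂ) ^ a i)
      = monomial A 1 := by
    rw [hA, ← prod_monomial_one]
    exact Finset.prod_congr rfl fun i _ => X_pow_eq_monomial
  have hMB : (∏ j, (X (Sum.inr j) : MvPolynomial (Fin (n + 1) ⊕ Fin (m + 1)) ℂ) ^ b j)
      = monomial B 1 := by
    rw [hB, ← prod_monomial_one]
    exact Finset.prod_congr rfl fun j _ => X_pow_eq_monomial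
  have hAinl : ∀ i, A (Sum.inl i) = a i := by
    intro i
    rw [hA, Finsupp.finset_sum_apply]
    simp [Finsupp.single_apply]
  have hAinr : ∀ j, A (Sum.inr j) = 0 := by
    intro j
    rw [hA, Finsupp.finset_sum_apply]
    simp [Finsupp.single_apply]
  have hBinr : ∀ j, B (Sum.inr j) = b j := by
    intro j
    rw [hB, Finsupp.finset_sum_apply]
    simp [Finsupp.single_apply]
  have hBinl : ∀ i, B (Sum.inl i) = 0 := by
    intro i
    rw [hB, Finsupp.finset_sum_apply]
    simp [Finsupp.single_apply]
  have hmeet : A ⊓ B = 0 := by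
    ext x
    rw [Finsupp.inf_apply]
    cases x with
    | inl i => simp [hBinl i]
    | inr j => simp [hAinr j]
  have hA0 : A ≠ 0 := by
    intro h
    have h1 := hAinl 0
    rw [h] at h1
    simp at h1
    have := ha 0
    omega
  have hB0 : B ≠ 0 := by
    intro h
    have h1 := hBinr 0
    rw [h] at h1
    simp at h1
    have := hb 0
    omega
  have hBA : B ≠ A := by
    intro h
    have h1 := hBinl 0
    rw [h, hAinl] at h1
    have := ha 0
    omega
  rw [hMA, hMB, finrank_quot_eq (monomial A 1 + monomial B 1), finrank_quot_eq (monomial A 1),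
    finrank_quot_eq (monomial B 1), span_mderiv_sum A B hmeet, span_mderiv_monomial A,
    span_mderiv_monomial B]
  have hsetA : {e : Fin (n + 1) ⊕ Fin (m + 1) →₀ ℕ | e ≤ A} = ↑(Finset.Iic A) :=
    (Finset.coe_Iic A).symm
  have hsetB : {e : Fin (n + 1) ⊕ Fin (m + 1) →₀ ℕ | e ≤ B} = ↑(Finset.Iic B) :=
    (Finset.coe_Iic B).symm
  set U : Finset (Fin (n + 1) ⊕ Fin (m + 1) →₀ ℕ) :=
    (Finset.Iic A).erase A ∪ (Finset.Iic B).erase B with hU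
  have hsetU : ({e | e ≤ A ∧ e ≠ A} ∪ {e | e ≤ B ∧ e ≠ B} :
      Set (Fin (n + 1) ⊕ Fin (m + 1) →₀ ℕ)) = ↑U := by
    rw [hU, Finset.coe_union, Finset.coe_erase, Finset.coe_erase, Finset.coe_Iic,
      Finset.coe_Iic]
    ext e
    simp only [Set.mem_union, Set.mem_setOf_eq, Set.mem_diff, Set.mem_Iic,
      Set.mem_singleton_iff]
  have hAU : A ∉ U := by
    rw [hU]
    simp only [Finset.mem_union, Finset.mem_erase, Finset.mem_Iic, not_or, not_and]
    constructor
    · intro h; exact absurd rfl h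
    · intro h hAB
      exact hA0 (le_antisymm (by simpa [hmeet] using le_inf le_rfl hAB) (zero_le (a := A)))
  rw [hsetA, hsetB, hsetU, finrank_span_insert A B hBA _ (by simpa using hAU),
    ← Finset.coe_insert, finrank_span_monomials, finrank_span_monomials,
    finrank_span_monomials]
  rw [Finset.card_insert_of_notMem hAU]
  have hunion := Finset.card_union_add_card_inter ((Finset.Iic A).erase A)
    ((Finset.Iic B).erase B)
  rw [← hU] at hunion
  have hinter : ((Finset.Iic A).erase A) ∩ ((Finset.Iic B).erase B) = {0} := by
    ext e
    simp only [Finset.mem_inter, Finset.mem_erase, Finset.mem_Iic, Finset.mem_singleton]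
    constructor
    · rintro ⟨⟨-, heA⟩, ⟨-, heB⟩⟩
      exact le_antisymm (by simpa [hmeet] using le_inf heA heB) (zero_le (a := e))
    · rintro rfl
      exact ⟨⟨Ne.symm hA0, zero_le (a := A)⟩, ⟨Ne.symm hB0, zero_le (a := B)⟩⟩
  have herA : ((Finset.Iic A).erase A).card = (Finset.Iic A).card - 1 :=
    Finset.card_erase_of_mem (Finset.mem_Iic.mpr le_rfl)
  have herB : ((Finset.Iic B).erase B).card = (Finset.Iic B).card - 1 :=
    Finset.card_erase_of_mem (Finset.mem_Iic.mpr le_rfl)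
  have h2A : 2 ≤ (Finset.Iic A).card := by
    have hsub : ({0, A} : Finset (Fin (n + 1) ⊕ Fin (m + 1) →₀ ℕ)) ⊆ Finset.Iic A := by
      intro e he
      rcases Finset.mem_insert.mp he with rfl | he
      · exact Finset.mem_Iic.mpr (zero_le (a := A))
      · rw [Finset.mem_singleton.mp he]
        exact Finset.mem_Iic.mpr le_rfl
    have hc := Finset.card_le_card hsub
    rwa [Finset.card_pair (Ne.symm hA0)] at hc
  have h2B : 2 ≤ (Finset.Iic B).card := by
    have hsub : ({0, B} : Finset (Fin (n + 1) ⊕ Fin (m + 1) →₀ ℕ)) ⊆ Finset.Iic B := by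
      intro e he
      rcases Finset.mem_insert.mp he with rfl | he
      · exact Finset.mem_Iic.mpr (zero_le (a := B))
      · rw [Finset.mem_singleton.mp he]
        exact Finset.mem_Iic.mpr le_rfl
    have hc := Finset.card_le_card hsub
    rwa [Finset.card_pair (Ne.symm hB0)] at hc
  rw [hinter, Finset.card_singleton] at hunion
  omega


end
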